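/- Let S be a semigroup generated by a well-ordered set A, with ν : A⁺ → S extending the inclusion. If w ∈ A⁺ is a reduced word for S of length at least 2, then its proper prefix p(w) (w with last letter removed) and its proper suffix s(w) (w with first letter removed) are both reduced words for S. -/

import Mathlib

def shortLex {A : Type*} (r : A → A → Prop) (u v : List A) : Prop :=
  u.length < v.length ∨ (u.length = v.length ∧ List.Lex r u v)

def shortLexLE {A : Type*} (r : A → A → Prop) (u v : List A) : Prop :=
  shortLex r u v ∨ u = v

def toL {A : Type*} (x : FreeSemigroup A) : List A := x.head :: x.tail

/-- `w` is a reduced word: it is short-lex minimal in its ν-fiber. -/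
def Reduced {A S : Type*} [LinearOrder A] [Semigroup S] (ν : FreeSemigroup A →ₙ* S)
    (w : FreeSemigroup A) : Prop :=
  ∀ v : FreeSemigroup A, ν v = ν w → shortLexLE (· < ·) (toL w) (toL v)


lemma toL_mul {A : Type*} (x y : FreeSemigroup A) : toL (x*y) = toL x ++ toL y := rfl

lemma toL_inj {A : Type*} {x y : FreeSemigroup A} (h : toL x = toL y) : x = y := by
  cases x; cases y
  simp [toL] at h
  simp [h.1, h.2]

lemma lex_append_singleton {A : Type*} [LinearOrder A] {x y : List A} {b : A}
    (hlen : x.length = y.length) (h : List.Lex (· < ·) (x ++ [b]) (y ++ [b])) :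
    List.Lex (· < ·) x y ∨ x = y := by
  induction x generalizing y with
  | nil =>
    cases y with
    | nil => simp
    | cons c l => simp at hlen
  | cons a x ih =>
    cases y with
    | nil => simp at hlen
    | cons c l =>
      simp at hlen
      cases h with
      | rel hr => exact Or.inl (List.Lex.rel hr)
      | cons h' =>
        rcases ih hlen h' with h'' | h''
        · exact Or.inl (List.Lex.cons h'')
        · exact Or.inr (by rw [h''])

theorem stmt12 {S : Type*} [Semigroup S] {A : Set S} [LinearOrder ↥A]
    (ν : FreeSemigroup ↥A →ₙ* S) (hν : ∀ a : ↥A, ν (FreeSemigroup.of a) = ↑a)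
    (w : FreeSemigroup ↥A) (hw : Reduced ν w) (h2 : 2 ≤ (toL w).length) :
    (∀ (u : FreeSemigroup ↥A) (b : ↥A), w = u * FreeSemigroup.of b → Reduced ν u) ∧
    (∀ (a : ↥A) (v : FreeSemigroup ↥A), w = FreeSemigroup.of a * v → Reduced ν v) := by
  constructor
  · intro u b hub v hv
    have hw' := hw (v * FreeSemigroup.of b) (by rw [map_mul, hv, hub, map_mul])
    rw [hub, toL_mul, toL_mul] at hw'
    rcases hw' with (hlt | ⟨hlen, hlex⟩) | heq
    · left; left
      simpa using hlt
    · simp only [List.length_append] at hlen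
      have hlen' : (toL u).length = (toL v).length := by
        simpa [toL] using hlen
      rcases lex_append_singleton hlen' (by simpa [toL] using hlex) with h' | h'
      · exact Or.inl (Or.inr ⟨hlen', h'⟩)
      · exact Or.inr h'
    · exact Or.inr (List.append_cancel_right heq)
  · intro a v hav u hu
    have hw' := hw (FreeSemigroup.of a * u) (by rw [map_mul, hu, hav, map_mul])
    rw [hav, toL_mul, toL_mul] at hw'
    rcases hw' with (hlt | ⟨hlen, hlex⟩) | heq
    · left; left
      simpa [toL] using hlt
    · have hlen' : (toL v).length = (toL u).length := by
        simpa [toL] using hlen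
      have hlex' : List.Lex (· < ·) (toL v) (toL u) := by
        have : List.Lex (· < ·) (a :: toL v) (a :: toL u) := by
          simpa [toL, FreeSemigroup.of] using hlex
        rwa [List.lex_cons_iff] at this
      exact Or.inl (Or.inr ⟨hlen', hlex'⟩)
    · right
      have : a :: toL v = a :: toL u := by simpa [toL, FreeSemigroup.of] using heq
      exact List.cons_injective this
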